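/- arXiv:2006.16398 — 2 statements merged into one kernel-verified Lean document; each statement's English description precedes it below -/
import Mathlib

section
/- (Lemma 2) Suppose φ'' ∈ WLSC(α−2, c, x₀) for some c ∈ (0,1], x₀ ≥ 0 and α > 0. Then there exists a constant C > 0 such that for all x > x₀, C φ''(x) ≤ σ² + ∫_{(0,1/x)} s² ν(ds). -/
open MeasureTheory Real Set Filter

noncomputable section

/-- Weak lower scaling property at infinity: `f(l*x) ≥ c * l^τ * f(x)` for `l ≥ 1`, `x > x₁`. -/
def WLSC (f : ℝ → ℝ) (τ c x₁ : ℝ) : Prop :=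
  ∀ l : ℝ, 1 ≤ l → ∀ x : ℝ, x₁ < x → c * l ^ τ * f x ≤ f (l * x)

/-- Weak upper scaling property at infinity: `f(l*x) ≤ C * l^τ * f(x)` for `l ≥ 1`, `x > x₁`. -/
def WUSC (f : ℝ → ℝ) (τ C x₁ : ℝ) : Prop :=
  ∀ l : ℝ, 1 ≤ l → ∀ x : ℝ, x₁ < x → f (l * x) ≤ C * l ^ τ * f x

/-- The Pruitt function `K(r) = σ²/r² + r⁻² ∫_{(0,r)} s² ν(ds)`. -/
def pruittK (σ : ℝ) (ν : Measure ℝ) (r : ℝ) : ℝ :=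
  σ ^ 2 / r ^ 2 + (∫ s in Ioo (0:ℝ) r, s ^ 2 ∂ν) / r ^ 2

/-- The Pruitt function `h(r) = σ²/r² + ∫_{(0,∞)} min(1, s²/r²) ν(ds)`. -/
def pruittH (σ : ℝ) (ν : Measure ℝ) (r : ℝ) : ℝ :=
  σ ^ 2 / r ^ 2 + ∫ s in Ioi (0:ℝ), min 1 (s ^ 2 / r ^ 2) ∂ν

/-- The real part of the characteristic exponent:
`Re ψ(ξ) = σ²ξ² + ∫_{(0,∞)} (1 − cos(ξx)) ν(dx)`. -/
def rePsi (σ : ℝ) (ν : Measure ℝ) (ξ : ℝ) : ℝ :=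
  σ ^ 2 * ξ ^ 2 + ∫ x in Ioi (0:ℝ), (1 - Real.cos (ξ * x)) ∂ν

/-- `ψ*(r) = sup_{|z| ≤ r} Re ψ(z)`. -/
def psiStar (σ : ℝ) (ν : Measure ℝ) (r : ℝ) : ℝ :=
  sSup (rePsi σ ν '' {z : ℝ | |z| ≤ r})

/-- `ψ⁻¹(s) = sup{r > 0 : ψ*(r) = s}`. -/
def psiInv (σ : ℝ) (ν : Measure ℝ) (s : ℝ) : ℝ :=
  sSup {r : ℝ | 0 < r ∧ psiStar σ ν r = s}

/-- `Φ(x) = x² φ''(x)`. -/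
def bigPhi (φ'' : ℝ → ℝ) (x : ℝ) : ℝ := x ^ 2 * φ'' x

/-- `Φ*(r) = sup_{0 < s ≤ r} Φ(s)`. -/
def bigPhiStar (φ'' : ℝ → ℝ) (r : ℝ) : ℝ := sSup (bigPhi φ'' '' Ioc (0:ℝ) r)

/-- `Φ⁻¹(s) = sup{r > 0 : Φ*(r) = s}`. -/
def bigPhiInv (φ'' : ℝ → ℝ) (s : ℝ) : ℝ := sSup {r : ℝ | 0 < r ∧ bigPhiStar φ'' r = s}

/-- The characteristic (Lévy–Khintchine) exponent
`ψ(ξ) = σ²ξ² − ibξ − ∫_{(0,∞)} (e^{iξx} − 1 − iξx 1_{x<1}) ν(dx)`. -/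
def charExp (σ b : ℝ) (ν : Measure ℝ) (ξ : ℝ) : ℂ :=
  (σ : ℂ) ^ 2 * (ξ : ℂ) ^ 2 - Complex.I * (b : ℂ) * (ξ : ℂ) -
    ∫ x in Ioi (0:ℝ), (Complex.exp (Complex.I * (ξ : ℂ) * (x : ℂ)) - 1 -
      Complex.I * (ξ : ℂ) * (x : ℂ) * (if x < 1 then (1:ℂ) else 0)) ∂ν

/-- The holomorphic extension of the Laplace exponent to `{Re z > 0}`. -/
def laplaceC (σ b : ℝ) (ν : Measure ℝ) (z : ℂ) : ℂ :=
  (σ : ℂ) ^ 2 * z ^ 2 - (b : ℂ) * z +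
    ∫ x in Ioi (0:ℝ), (Complex.exp (-(z * (x : ℂ))) - 1 +
      z * (x : ℂ) * (if x < 1 then (1:ℂ) else 0)) ∂ν

/-- `b_r = b + ∫_{(0,∞)} s (1_{s<r} − 1_{s<1}) ν(ds)`. -/
def brFn (b : ℝ) (ν : Measure ℝ) (r : ℝ) : ℝ :=
  b + ∫ s in Ioi (0:ℝ), s * ((if s < r then (1:ℝ) else 0) - (if s < 1 then (1:ℝ) else 0)) ∂ν

/-- The majorant `η`: `η(0) = ∞`, `η(s) = s⁻¹ Φ*(1/s)` for `0 < s < 1/x₀`,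
and `η(s) = A s⁻¹ |φ(1/s)|` for `s ≥ 1/x₀`, where `A = Φ*(x₀)/|φ(x₀)|`. -/
def etaFn (φ φ'' : ℝ → ℝ) (x₀ : ℝ) (s : ℝ) : ENNReal :=
  if s ≤ 0 then ⊤
  else if x₀ * s < 1 then ENNReal.ofReal (s⁻¹ * bigPhiStar φ'' s⁻¹)
  else ENNReal.ofReal ((bigPhiStar φ'' x₀ / |φ x₀|) * s⁻¹ * |φ s⁻¹|)


lemma aux_mul_exp (a u : ℝ) (ha : 0 < a) : u * Real.exp (-(a * u)) ≤ 1 / a := by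
  rw [le_div_iff₀ ha]
  have h1 : a * u ≤ Real.exp (a * u) := by
    have := Real.add_one_le_exp (a * u); linarith
  have h2 : (a * u) * Real.exp (-(a * u)) ≤ Real.exp (a * u) * Real.exp (-(a * u)) :=
    mul_le_mul_of_nonneg_right h1 (Real.exp_nonneg _)
  rw [← Real.exp_add] at h2
  simp only [add_neg_cancel, Real.exp_zero] at h2
  nlinarith [h2]

lemma aux_sq_exp (l s : ℝ) (hl : 0 < l) (hs : 0 ≤ s) :
    s ^ 2 * Real.exp (-(l * s)) ≤ 4 / l ^ 2 := by
  have h := aux_mul_exp (l / 2) s (by positivity)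
  have hexp : Real.exp (-(l * s)) = Real.exp (-(l / 2 * s)) ^ 2 := by
    rw [← Real.exp_nat_mul]; ring_nf
  have hnn : 0 ≤ s * Real.exp (-(l / 2 * s)) := by positivity
  have h2 : (s * Real.exp (-(l / 2 * s))) ^ 2 ≤ (1 / (l / 2)) ^ 2 :=
    pow_le_pow_left₀ hnn h 2
  calc s ^ 2 * Real.exp (-(l * s)) = (s * Real.exp (-(l / 2 * s))) ^ 2 := by
        rw [hexp]; ring
    _ ≤ (1 / (l / 2)) ^ 2 := h2
    _ = 4 / l ^ 2 := by field_simp; ring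

lemma aux_int_min (ν : Measure ℝ)
    (hint : ∫⁻ x in Ioi (0:ℝ), ENNReal.ofReal (min 1 (x ^ 2)) ∂ν ≠ ⊤) :
    Integrable (fun s => min 1 (s ^ 2)) (ν.restrict (Ioi 0)) := by
  refine ⟨(continuous_const.min (continuous_pow 2)).aestronglyMeasurable, ?_⟩
  rw [hasFiniteIntegral_iff_norm]
  have : ∀ s : ℝ, ENNReal.ofReal ‖min 1 (s ^ 2)‖ = ENNReal.ofReal (min 1 (s ^ 2)) := by
    intro s
    rw [Real.norm_eq_abs, abs_of_nonneg (le_min one_pos.le (sq_nonneg s))]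
  simp only [this]
  exact hint.lt_top

lemma aux_int_exp (ν : Measure ℝ)
    (hint : ∫⁻ x in Ioi (0:ℝ), ENNReal.ofReal (min 1 (x ^ 2)) ∂ν ≠ ⊤)
    (l : ℝ) (hl : 0 < l) :
    Integrable (fun s => s ^ 2 * Real.exp (-(l * s))) (ν.restrict (Ioi 0)) := by
  refine Integrable.mono' ((aux_int_min ν hint).const_mul (max 1 (4 / l ^ 2)))
    ((continuous_pow 2).mul (Real.continuous_exp.comp (by continuity))).aestronglyMeasurable ?_
  rw [ae_restrict_iff' measurableSet_Ioi]
  filter_upwards with s hs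
  have hs0 : (0:ℝ) < s := hs
  have hnn : 0 ≤ s ^ 2 * Real.exp (-(l * s)) := by positivity
  rw [Real.norm_eq_abs, abs_of_nonneg hnn]
  rcases le_total (s ^ 2) 1 with h | h
  · have : s ^ 2 * Real.exp (-(l * s)) ≤ s ^ 2 := by
      nlinarith [Real.exp_le_one_iff.mpr (by nlinarith : -(l * s) ≤ 0), sq_nonneg s]
    calc s ^ 2 * Real.exp (-(l * s)) ≤ s ^ 2 := this
      _ = 1 * min 1 (s ^ 2) := by rw [min_eq_right h, one_mul]
      _ ≤ max 1 (4 / l ^ 2) * min 1 (s ^ 2) := by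
          apply mul_le_mul_of_nonneg_right (le_max_left _ _)
          exact le_min one_pos.le (sq_nonneg s)
  · calc s ^ 2 * Real.exp (-(l * s)) ≤ 4 / l ^ 2 := aux_sq_exp l s hl hs0.le
      _ = (4 / l ^ 2) * min 1 (s ^ 2) := by rw [min_eq_left h, mul_one]
      _ ≤ max 1 (4 / l ^ 2) * min 1 (s ^ 2) := by
          apply mul_le_mul_of_nonneg_right (le_max_right _ _)
          exact le_min one_pos.le (sq_nonneg s)

lemma aux_int_sq (ν : Measure ℝ)
    (hint : ∫⁻ x in Ioi (0:ℝ), ENNReal.ofReal (min 1 (x ^ 2)) ∂ν ≠ ⊤)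
    (r : ℝ) (hr : 0 < r) :
    IntegrableOn (fun s : ℝ => s ^ 2) (Ioo 0 r) ν := by
  have hbase : Integrable (fun s => min 1 (s ^ 2)) (ν.restrict (Ioo 0 r)) :=
    (aux_int_min ν hint).mono_measure (Measure.restrict_mono Ioo_subset_Ioi_self le_rfl)
  refine Integrable.mono' (hbase.const_mul (max 1 (r ^ 2)))
    (continuous_pow 2).aestronglyMeasurable ?_
  rw [ae_restrict_iff' measurableSet_Ioo]
  filter_upwards with s hs
  rw [Real.norm_eq_abs, abs_of_nonneg (sq_nonneg s)]
  rcases le_total (s ^ 2) 1 with h | h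
  · calc s ^ 2 = 1 * min 1 (s ^ 2) := by rw [min_eq_right h, one_mul]
      _ ≤ max 1 (r ^ 2) * min 1 (s ^ 2) :=
        mul_le_mul_of_nonneg_right (le_max_left _ _) (le_min one_pos.le (sq_nonneg s))
  · have hsr : s ^ 2 ≤ r ^ 2 := by nlinarith [hs.1, hs.2]
    calc s ^ 2 ≤ r ^ 2 := hsr
      _ = r ^ 2 * min 1 (s ^ 2) := by rw [min_eq_left h, mul_one]
      _ ≤ max 1 (r ^ 2) * min 1 (s ^ 2) :=
        mul_le_mul_of_nonneg_right (le_max_right _ _) (le_min one_pos.le (sq_nonneg s))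


set_option maxHeartbeats 1000000 in
/-- Lemma 2. -/
theorem statement6
    (ν : Measure ℝ) [SigmaFinite ν]
    (hint : ∫⁻ x in Ioi (0:ℝ), ENNReal.ofReal (min 1 (x ^ 2)) ∂ν ≠ ⊤)
    (σ b : ℝ) (hσ : 0 ≤ σ)
    (φ φ' φ'' : ℝ → ℝ)
    (hφ : ∀ l : ℝ, 0 ≤ l → φ l = σ ^ 2 * l ^ 2 - b * l +
      ∫ x in Ioi (0:ℝ), (Real.exp (-(l * x)) - 1 + l * x * (if x < 1 then 1 else 0)) ∂ν)
    (hD1 : ∀ x : ℝ, 0 < x → HasDerivAt φ (φ' x) x)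
    (hD2 : ∀ x : ℝ, 0 < x → HasDerivAt φ' (φ'' x) x)
    (hφ'' : ∀ l : ℝ, 0 < l → φ'' l = 2 * σ ^ 2 + ∫ x in Ioi (0:ℝ), x ^ 2 * Real.exp (-(l * x)) ∂ν)
    (α c x₀ : ℝ) (hα : 0 < α) (hc : c ∈ Ioc (0:ℝ) 1) (hx₀ : 0 ≤ x₀)
    (hscal : WLSC φ'' (α - 2) c x₀) :
    ∃ C : ℝ, 0 < C ∧ ∀ x : ℝ, x₀ < x →
      C * φ'' x ≤ σ ^ 2 + ∫ s in Ioo (0:ℝ) x⁻¹, s ^ 2 ∂ν := by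
  obtain ⟨hc0, hc1⟩ := hc
  -- choose λ₀ with exp(1-λ₀) ≤ (c/2) λ₀^(α-2)
  have htend : Tendsto (fun l : ℝ => l ^ (2 - α) * Real.exp (-1 * l)) atTop (nhds 0) :=
    tendsto_rpow_mul_exp_neg_mul_atTop_nhds_zero (2 - α) 1 one_pos
  have hpos : (0:ℝ) < c / (2 * Real.exp 1) := by positivity
  obtain ⟨l₀, hl₀⟩ := ((htend.eventually (gt_mem_nhds hpos)).and (eventually_ge_atTop 1)).exists
  obtain ⟨hsmall, hl1⟩ := hl₀
  have hl0 : (0:ℝ) < l₀ := lt_of_lt_of_le one_pos hl1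
  have hp : (0:ℝ) < l₀ ^ (2 - α) := Real.rpow_pos_of_pos hl0 _
  have hp' : (0:ℝ) < l₀ ^ (α - 2) := Real.rpow_pos_of_pos hl0 _
  have hinv : l₀ ^ (α - 2) = (l₀ ^ (2 - α))⁻¹ := by
    rw [← Real.rpow_neg hl0.le]; ring_nf
  have hkey : Real.exp (1 - l₀) ≤ c / 2 * l₀ ^ (α - 2) := by
    rw [hinv, ← div_eq_mul_inv, le_div_iff₀ hp]
    have h1 : Real.exp (1 - l₀) * l₀ ^ (2 - α)
        = Real.exp 1 * (l₀ ^ (2 - α) * Real.exp (-1 * l₀)) := by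
      rw [Real.exp_sub]
      rw [show (-1 : ℝ) * l₀ = -l₀ by ring, Real.exp_neg]
      field_simp
    rw [h1]
    calc Real.exp 1 * (l₀ ^ (2 - α) * Real.exp (-1 * l₀))
        ≤ Real.exp 1 * (c / (2 * Real.exp 1)) :=
          mul_le_mul_of_nonneg_left hsmall.le (Real.exp_nonneg 1)
      _ = c / 2 := by field_simp
  refine ⟨c / 4 * l₀ ^ (α - 2), by positivity, fun x hxx => ?_⟩
  have hx : (0:ℝ) < x := lt_of_le_of_lt hx₀ hxx
  have hrx : (0:ℝ) < x⁻¹ := by positivity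
  have hIl : IntegrableOn (fun s => s ^ 2 * Real.exp (-(l₀ * x * s))) (Ioi 0) ν :=
    aux_int_exp ν hint (l₀ * x) (by positivity)
  have hIx : IntegrableOn (fun s => s ^ 2 * Real.exp (-(x * s))) (Ioi 0) ν :=
    aux_int_exp ν hint x hx
  have hIsq := aux_int_sq ν hint x⁻¹ hrx
  set J := ∫ s in Ioo (0:ℝ) x⁻¹, s ^ 2 ∂ν with hJ
  have hJnn : 0 ≤ J := setIntegral_nonneg measurableSet_Ioo fun s _ => sq_nonneg s
  have hInn : 0 ≤ ∫ s in Ioi (0:ℝ), s ^ 2 * Real.exp (-(x * s)) ∂ν :=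
    setIntegral_nonneg measurableSet_Ioi fun s _ => by positivity
  have hφnn : 0 ≤ φ'' x := by
    rw [hφ'' x hx]; have : (0:ℝ) ≤ 2 * σ ^ 2 := by positivity
    linarith
  have hIciSub : Ici x⁻¹ ⊆ Ioi (0:ℝ) := Ici_subset_Ioi.mpr hrx
  have hIooSub : Ioo (0:ℝ) x⁻¹ ⊆ Ioi (0:ℝ) := Ioo_subset_Ioi_self
  have hsplit : (∫ s in Ioi (0:ℝ), s ^ 2 * Real.exp (-(l₀ * x * s)) ∂ν)
      = (∫ s in Ioo (0:ℝ) x⁻¹, s ^ 2 * Real.exp (-(l₀ * x * s)) ∂ν)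
        + ∫ s in Ici x⁻¹, s ^ 2 * Real.exp (-(l₀ * x * s)) ∂ν := by
    rw [← setIntegral_union ((Iio_disjoint_Ici le_rfl).mono_left Ioo_subset_Iio_self) measurableSet_Ici
      (hIl.mono_set hIooSub) (hIl.mono_set hIciSub), Ioo_union_Ici_eq_Ioi hrx]
  have hb1 : (∫ s in Ioo (0:ℝ) x⁻¹, s ^ 2 * Real.exp (-(l₀ * x * s)) ∂ν) ≤ J := by
    refine setIntegral_mono_on (hIl.mono_set hIooSub) hIsq measurableSet_Ioo fun s hs => ?_
    have h1 : Real.exp (-(l₀ * x * s)) ≤ 1 :=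
      Real.exp_le_one_iff.mpr (by nlinarith [hs.1, mul_pos (mul_pos hl0 hx) hs.1])
    nlinarith [sq_nonneg s]
  have hb2 : (∫ s in Ici x⁻¹, s ^ 2 * Real.exp (-(l₀ * x * s)) ∂ν)
      ≤ Real.exp (1 - l₀) * ∫ s in Ioi (0:ℝ), s ^ 2 * Real.exp (-(x * s)) ∂ν := by
    calc (∫ s in Ici x⁻¹, s ^ 2 * Real.exp (-(l₀ * x * s)) ∂ν)
        ≤ ∫ s in Ici x⁻¹, Real.exp (1 - l₀) * (s ^ 2 * Real.exp (-(x * s))) ∂ν := by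
          refine setIntegral_mono_on (hIl.mono_set hIciSub)
            ((hIx.mono_set hIciSub).const_mul _) measurableSet_Ici fun s hs => ?_
          have hs0 : (0:ℝ) < s := lt_of_lt_of_le hrx hs
          have hxs : 1 ≤ x * s := by
            rw [← mul_inv_cancel₀ hx.ne']
            exact mul_le_mul_of_nonneg_left hs hx.le
          have he : Real.exp (-(l₀ * x * s)) ≤ Real.exp (1 - l₀) * Real.exp (-(x * s)) := by
            rw [← Real.exp_add]
            apply Real.exp_le_exp.mpr
            nlinarith
          nlinarith [mul_le_mul_of_nonneg_left he (sq_nonneg s)]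
      _ = Real.exp (1 - l₀) * ∫ s in Ici x⁻¹, s ^ 2 * Real.exp (-(x * s)) ∂ν :=
          integral_const_mul _ _
      _ ≤ Real.exp (1 - l₀) * ∫ s in Ioi (0:ℝ), s ^ 2 * Real.exp (-(x * s)) ∂ν := by
          apply mul_le_mul_of_nonneg_left _ (Real.exp_nonneg _)
          refine setIntegral_mono_set hIx ?_ (HasSubset.Subset.eventuallyLE hIciSub)
          filter_upwards with s using by positivity
  have h1 : c * l₀ ^ (α - 2) * φ'' x ≤ φ'' (l₀ * x) := hscal l₀ hl1 x hxx
  have h2 : φ'' (l₀ * x) ≤ 2 * σ ^ 2 + J + Real.exp (1 - l₀) * φ'' x := by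
    rw [hφ'' (l₀ * x) (by positivity), hφ'' x hx]
    have he2 : Real.exp (1 - l₀) * (∫ s in Ioi (0:ℝ), s ^ 2 * Real.exp (-(x * s)) ∂ν)
        ≤ Real.exp (1 - l₀) * (2 * σ ^ 2 + ∫ s in Ioi (0:ℝ), s ^ 2 * Real.exp (-(x * s)) ∂ν) := by
      apply mul_le_mul_of_nonneg_left _ (Real.exp_nonneg _)
      nlinarith [sq_nonneg σ]
    linarith [hsplit, hb1, hb2]
  have hmul : Real.exp (1 - l₀) * φ'' x ≤ c / 2 * l₀ ^ (α - 2) * φ'' x := by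
    have := mul_le_mul_of_nonneg_right hkey hφnn
    linarith
  linarith [h1, h2, hmul, hJnn, sq_nonneg σ]


end
end

section
/- (Lemma 1) Suppose φ'' ∈ WLSC(α−2, c, x₀) for some c ∈ (0,1], x₀ ≥ 0 and α > 0. Then there exists a constant C > 0 such that for all w > x₀ and all λ ∈ ℝ, Re(φ(w) − φ(w + iλ)) ≥ C λ² φ''(max(|λ|, w)); here φ denotes the holomorphic extension of the Laplace exponent to {Re z > 0}, for which Re(φ(w) − φ(w+iλ)) = σ²λ² + ∫_{(0,∞)} (1 − cos(λs)) e^{−ws} ν(ds). -/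
open MeasureTheory Real Set Filter

noncomputable section

section Aux

open MeasureTheory Real Set

private lemma aux_sq_exp_le {t x : ℝ} (ht : 0 < t) (hx : 0 ≤ x) :
    x ^ 2 * Real.exp (-(t * x)) ≤ 4 / t ^ 2 := by
  have h1 : t * x / 2 ≤ Real.exp (t * x / 2) := by
    have := Real.add_one_le_exp (t * x / 2); linarith
  have h2 : Real.exp (t * x / 2) * Real.exp (t * x / 2) = Real.exp (t * x) := by
    rw [← Real.exp_add]; ring_nf
  have h3 : Real.exp (-(t * x)) * Real.exp (t * x) = 1 := by
    rw [← Real.exp_add]; simp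
  have htx : 0 ≤ t * x := mul_nonneg ht.le hx
  have h4 : (t * x) ^ 2 ≤ 4 * Real.exp (t * x) := by
    nlinarith [Real.exp_pos (t * x / 2)]
  have h5 := mul_le_mul_of_nonneg_right h4 (Real.exp_pos (-(t * x))).le
  have h6 : 4 * Real.exp (t * x) * Real.exp (-(t * x)) = 4 := by
    nlinarith [h3]
  have key : (t * x) ^ 2 * Real.exp (-(t * x)) ≤ 4 := by linarith
  have ht2 : (0:ℝ) < t ^ 2 := by positivity
  have heq : x ^ 2 * Real.exp (-(t * x)) = (t * x) ^ 2 * Real.exp (-(t * x)) / t ^ 2 := by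
    field_simp
  rw [heq]
  gcongr

private lemma aux_integrable_min {ν : Measure ℝ}
    (hint : ∫⁻ x in Ioi (0:ℝ), ENNReal.ofReal (min 1 (x ^ 2)) ∂ν ≠ ⊤) :
    IntegrableOn (fun x : ℝ => min 1 (x ^ 2)) (Ioi 0) ν := by
  constructor
  · exact (continuous_const.min (continuous_pow 2)).aestronglyMeasurable
  · rw [hasFiniteIntegral_iff_ofReal
      (Filter.Eventually.of_forall fun x => le_min zero_le_one (sq_nonneg x))]
    exact lt_top_iff_ne_top.2 hint

private lemma aux_integrable_of_bound {ν : Measure ℝ}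
    (hint : ∫⁻ x in Ioi (0:ℝ), ENNReal.ofReal (min 1 (x ^ 2)) ∂ν ≠ ⊤)
    {E : Type*} [NormedAddCommGroup E] {f : ℝ → E}
    (hm : AEStronglyMeasurable f (ν.restrict (Ioi 0))) {M : ℝ}
    (hb : ∀ x ∈ Ioi (0:ℝ), ‖f x‖ ≤ M * min 1 (x ^ 2)) :
    IntegrableOn f (Ioi 0) ν := by
  refine Integrable.mono' ((aux_integrable_min hint).const_mul M) hm ?_
  exact (ae_restrict_iff' measurableSet_Ioi).2 (Filter.Eventually.of_forall hb)

private lemma aux_int_sq_exp {ν : Measure ℝ}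
    (hint : ∫⁻ x in Ioi (0:ℝ), ENNReal.ofReal (min 1 (x ^ 2)) ∂ν ≠ ⊤)
    {t : ℝ} (ht : 0 < t) :
    IntegrableOn (fun x : ℝ => x ^ 2 * Real.exp (-(t * x))) (Ioi 0) ν := by
  refine aux_integrable_of_bound hint
    ((continuous_pow 2 |>.mul ((continuous_const.mul continuous_id).neg.rexp)).aestronglyMeasurable)
    (M := 1 + 4 / t ^ 2) ?_
  intro x hx
  have hx0 : (0:ℝ) < x := hx
  rw [Real.norm_eq_abs, abs_of_nonneg (by positivity)]
  have h4 : (0:ℝ) ≤ 4 / t ^ 2 := by positivity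
  rcases le_or_gt x 1 with h | h
  · rw [min_eq_right (by nlinarith)]
    have he : Real.exp (-(t * x)) ≤ 1 := by
      rw [← Real.exp_zero]; exact Real.exp_le_exp.2 (by nlinarith)
    nlinarith [sq_nonneg x, (Real.exp_pos (-(t * x))).le]
  · rw [min_eq_left (by nlinarith)]
    have := aux_sq_exp_le ht hx0.le
    nlinarith

private lemma aux_int_cplx {ν : Measure ℝ}
    (hint : ∫⁻ x in Ioi (0:ℝ), ENNReal.ofReal (min 1 (x ^ 2)) ∂ν ≠ ⊤)
    {z : ℂ} (hz : 0 ≤ z.re) :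
    IntegrableOn (fun x : ℝ => Complex.exp (-(z * (x:ℂ))) - 1 +
      z * (x:ℂ) * (if x < 1 then (1:ℂ) else 0)) (Ioi 0) ν := by
  have hmeas : AEStronglyMeasurable (fun x : ℝ => Complex.exp (-(z * (x:ℂ))) - 1 +
      z * (x:ℂ) * (if x < 1 then (1:ℂ) else 0)) (ν.restrict (Ioi (0:ℝ))) := by
    apply Measurable.aestronglyMeasurable
    apply Measurable.add
    · exact (Complex.measurable_exp.comp
        ((Complex.measurable_ofReal.const_mul z).neg)).sub measurable_const
    · exact (Complex.measurable_ofReal.const_mul z).mul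
        (Measurable.ite measurableSet_Iio measurable_const measurable_const)
  set R := ‖z‖ with hRdef
  have hR0 : 0 ≤ R := norm_nonneg z
  refine aux_integrable_of_bound hint hmeas (M := (2 + R) * (1 + R) ^ 2) ?_
  intro x hx
  have hx0 : (0:ℝ) < x := hx
  have habse : ‖Complex.exp (-(z * (x:ℂ)))‖ ≤ 1 := by
    rw [Complex.norm_exp]
    have hre : (-(z * (x:ℂ))).re = -(z.re * x) := by simp [Complex.mul_re]
    rw [hre, ← Real.exp_zero]
    exact Real.exp_le_exp.2 (by nlinarith)
  have habsz : ‖z * (x:ℂ)‖ = R * x := by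
    rw [norm_mul, Complex.norm_real, Real.norm_eq_abs, abs_of_pos hx0]
  rcases lt_or_ge x 1 with h1 | h1
  · simp only [if_pos h1, mul_one]
    rw [min_eq_right (by nlinarith)]
    rcases le_or_gt (R * x) 1 with h2 | h2
    · have habs2 : ‖(-(z * (x:ℂ)))‖ = R * x := by
        rw [norm_neg, norm_mul, Complex.norm_real, Real.norm_eq_abs, abs_of_pos hx0]
      have hb := Complex.norm_exp_sub_one_sub_id_le (x := -(z * (x:ℂ))) (by rw [habs2]; exact h2)
      rw [habs2] at hb
      have hrw : Complex.exp (-(z * (x:ℂ))) - 1 + z * (x:ℂ)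
          = Complex.exp (-(z * (x:ℂ))) - 1 - (-(z * (x:ℂ))) := by ring
      rw [hrw]
      refine hb.trans ?_
      nlinarith [sq_nonneg (R * x), sq_nonneg x]
    · have hbound : ‖Complex.exp (-(z * (x:ℂ))) - 1 + z * (x:ℂ)‖ ≤ 2 + R * x := by
        calc ‖Complex.exp (-(z * (x:ℂ))) - 1 + z * (x:ℂ)‖
            ≤ ‖Complex.exp (-(z * (x:ℂ))) - 1‖ + ‖z * (x:ℂ)‖ := norm_add_le _ _
          _ ≤ (‖Complex.exp (-(z * (x:ℂ)))‖ + ‖(1:ℂ)‖) + R * x := by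
              rw [habsz]; gcongr; exact norm_sub_le _ _
          _ ≤ 2 + R * x := by rw [norm_one]; linarith
      refine hbound.trans ?_
      have hu : 1 < (1 + R) * x := by nlinarith
      have hsq : 1 ≤ ((1 + R) * x) ^ 2 := by nlinarith
      have hRx : R * x ≤ R := by nlinarith
      have h7 : (2 + R) * 1 ≤ (2 + R) * ((1 + R) * x) ^ 2 :=
        mul_le_mul_of_nonneg_left hsq (by linarith)
      have h8 : (2 + R) * ((1 + R) * x) ^ 2 = (2 + R) * (1 + R) ^ 2 * x ^ 2 := by ring
      linarith
  · simp only [if_neg (not_lt.2 h1), mul_zero, add_zero]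
    rw [min_eq_left (by nlinarith), mul_one]
    calc ‖Complex.exp (-(z * (x:ℂ))) - 1‖
        ≤ ‖Complex.exp (-(z * (x:ℂ)))‖ + ‖(1:ℂ)‖ := norm_sub_le _ _
      _ ≤ 2 := by rw [norm_one]; linarith
      _ ≤ (2 + R) * (1 + R) ^ 2 := by nlinarith

private lemma aux_int_cos {ν : Measure ℝ}
    (hint : ∫⁻ x in Ioi (0:ℝ), ENNReal.ofReal (min 1 (x ^ 2)) ∂ν ≠ ⊤)
    {w lam : ℝ} (hw : 0 < w) :
    IntegrableOn (fun x : ℝ => (1 - Real.cos (lam * x)) * Real.exp (-(w * x))) (Ioi 0) ν := by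
  refine aux_integrable_of_bound hint
    (((continuous_const.sub (Real.continuous_cos.comp (continuous_const.mul continuous_id))).mul
      ((continuous_const.mul continuous_id).neg.rexp)).aestronglyMeasurable)
    (M := 2 + lam ^ 2) ?_
  intro x hx
  have hx0 : (0:ℝ) < x := hx
  have hcos1 : Real.cos (lam * x) ≤ 1 := Real.cos_le_one _
  have hcosm : -1 ≤ Real.cos (lam * x) := Real.neg_one_le_cos _
  have he1 : Real.exp (-(w * x)) ≤ 1 := by
    rw [← Real.exp_zero]; exact Real.exp_le_exp.2 (by nlinarith)
  have he0 : (0:ℝ) < Real.exp (-(w * x)) := Real.exp_pos _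
  rw [Real.norm_eq_abs, abs_of_nonneg (by nlinarith)]
  rcases le_or_gt x 1 with h | h
  · rw [min_eq_right (by nlinarith)]
    have := Real.one_sub_sq_div_two_le_cos (x := lam * x)
    nlinarith [sq_nonneg lam, sq_nonneg (lam * x), sq_nonneg x]
  · rw [min_eq_left (by nlinarith)]
    nlinarith [sq_nonneg lam]

private lemma aux_re_diff {ν : Measure ℝ}
    (hint : ∫⁻ x in Ioi (0:ℝ), ENNReal.ofReal (min 1 (x ^ 2)) ∂ν ≠ ⊤)
    (σ b w lam : ℝ) (hw : 0 < w) :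
    (laplaceC σ b ν (w:ℂ) - laplaceC σ b ν ((w:ℂ) + Complex.I * (lam:ℂ))).re
      = σ ^ 2 * lam ^ 2 +
        ∫ x in Ioi (0:ℝ), (1 - Real.cos (lam * x)) * Real.exp (-(w * x)) ∂ν := by
  set z : ℂ := (w:ℂ) + Complex.I * (lam:ℂ) with hzdef
  have hzre : z.re = w := by simp [hzdef]
  have hF := aux_int_cplx hint (z := (w:ℂ)) (by simp [hw.le])
  have hG := aux_int_cplx hint (z := z) (by rw [hzre]; exact hw.le)
  have hsplit : laplaceC σ b ν (w:ℂ) - laplaceC σ b ν z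
      = ((σ:ℂ) ^ 2 * (w:ℂ) ^ 2 - (σ:ℂ) ^ 2 * z ^ 2 - ((b:ℂ) * (w:ℂ) - (b:ℂ) * z))
        + ∫ x in Ioi (0:ℝ),
            ((Complex.exp (-((w:ℂ) * (x:ℂ))) - 1 + (w:ℂ) * (x:ℂ) * (if x < 1 then (1:ℂ) else 0))
            - (Complex.exp (-(z * (x:ℂ))) - 1 + z * (x:ℂ) * (if x < 1 then (1:ℂ) else 0))) ∂ν := by
    rw [integral_sub hF hG]; unfold laplaceC; ring
  rw [hsplit, Complex.add_re]
  have h1 : ((σ:ℂ) ^ 2 * (w:ℂ) ^ 2 - (σ:ℂ) ^ 2 * z ^ 2 - ((b:ℂ) * (w:ℂ) - (b:ℂ) * z)).re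
      = σ ^ 2 * lam ^ 2 := by
    simp [hzdef, Complex.mul_re, Complex.mul_im, Complex.add_re, Complex.add_im, pow_two]
    ring
  have h2 : (∫ x in Ioi (0:ℝ),
        ((Complex.exp (-((w:ℂ) * (x:ℂ))) - 1 + (w:ℂ) * (x:ℂ) * (if x < 1 then (1:ℂ) else 0))
        - (Complex.exp (-(z * (x:ℂ))) - 1 + z * (x:ℂ) * (if x < 1 then (1:ℂ) else 0))) ∂ν).re
      = ∫ x in Ioi (0:ℝ), (1 - Real.cos (lam * x)) * Real.exp (-(w * x)) ∂ν := by
    have hFG : IntegrableOn (fun x : ℝ =>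
        (Complex.exp (-((w:ℂ) * (x:ℂ))) - 1 + (w:ℂ) * (x:ℂ) * (if x < 1 then (1:ℂ) else 0))
        - (Complex.exp (-(z * (x:ℂ))) - 1 + z * (x:ℂ) * (if x < 1 then (1:ℂ) else 0)))
        (Ioi 0) ν := hF.sub hG
    have hre := integral_re hFG
    simp only [RCLike.re_to_complex] at hre
    rw [← hre]
    refine setIntegral_congr_fun measurableSet_Ioi fun x hx => ?_
    simp only [RCLike.re_to_complex, Complex.sub_re, Complex.add_re, Complex.exp_re,
      Complex.one_re, Complex.mul_re, Complex.mul_im, Complex.neg_re, Complex.neg_im,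
      Complex.ofReal_re, Complex.ofReal_im, Complex.add_im, Complex.I_re, Complex.I_im,
      hzdef, apply_ite Complex.re, apply_ite Complex.im, Complex.one_im]
    rw [Real.cos_neg]
    split_ifs <;> simp <;> ring_nf <;> rw [Real.cos_neg] <;> ring
  rw [h1, h2]

end Aux

set_option maxHeartbeats 1000000 in
/-- Lemma 1. -/
theorem statement8
    (ν : Measure ℝ) [SigmaFinite ν]
    (hint : ∫⁻ x in Ioi (0:ℝ), ENNReal.ofReal (min 1 (x ^ 2)) ∂ν ≠ ⊤)
    (σ b : ℝ) (hσ : 0 ≤ σ)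
    (φ φ' φ'' : ℝ → ℝ)
    (hφ : ∀ l : ℝ, 0 ≤ l → φ l = σ ^ 2 * l ^ 2 - b * l +
      ∫ x in Ioi (0:ℝ), (Real.exp (-(l * x)) - 1 + l * x * (if x < 1 then 1 else 0)) ∂ν)
    (hD1 : ∀ x : ℝ, 0 < x → HasDerivAt φ (φ' x) x)
    (hD2 : ∀ x : ℝ, 0 < x → HasDerivAt φ' (φ'' x) x)
    (hφ'' : ∀ l : ℝ, 0 < l → φ'' l = 2 * σ ^ 2 + ∫ x in Ioi (0:ℝ), x ^ 2 * Real.exp (-(l * x)) ∂ν)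
    (α c x₀ : ℝ) (hα : 0 < α) (hc : c ∈ Ioc (0:ℝ) 1) (hx₀ : 0 ≤ x₀)
    (hscal : WLSC φ'' (α - 2) c x₀) :
    ∃ C : ℝ, 0 < C ∧ ∀ w : ℝ, x₀ < w → ∀ l : ℝ,
      C * l ^ 2 * φ'' (max |l| w) ≤
        (laplaceC σ b ν (w : ℂ) - laplaceC σ b ν ((w : ℂ) + Complex.I * (l : ℂ))).re := by
  obtain ⟨hc0, hc1⟩ := hc
  obtain ⟨K, hKdef⟩ : ∃ K : ℝ, K = 54 / c := ⟨_, rfl⟩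
  have hK1 : (1:ℝ) ≤ K := by
    rw [hKdef, le_div_iff₀ hc0]; linarith
  have hKpos : (0:ℝ) < K := lt_of_lt_of_le one_pos hK1
  obtain ⟨Q, hQdef⟩ : ∃ Q : ℝ, Q = K ^ (α - 2) := ⟨_, rfl⟩
  have hQpos : 0 < Q := hQdef ▸ Real.rpow_pos_of_pos hKpos _
  have hπ3 : (3:ℝ) < π := Real.pi_gt_three
  have hπ2 : (4:ℝ) ≤ π ^ 2 := by nlinarith
  have hπpos : (0:ℝ) < π ^ 2 := by nlinarith
  -- key numeric inequality
  have hKey : Real.exp (-((K - 1) * π)) ≤ c / 2 * Q := by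
    have hcK : c * K = 54 := by rw [hKdef]; field_simp
    have hb : Real.exp ((K - 1) / 3) ^ 3 = Real.exp (K - 1) := by
      rw [← Real.exp_nat_mul]; norm_num; ring_nf
    have ha := Real.add_one_le_exp ((K - 1) / 3)
    have h1 : (K / 3) ^ 3 ≤ Real.exp (K - 1) := by
      calc (K / 3) ^ 3 ≤ ((K - 1) / 3 + 1) ^ 3 := by
            apply pow_le_pow_left₀ (by linarith) (by linarith)
        _ ≤ Real.exp ((K - 1) / 3) ^ 3 :=
            pow_le_pow_left₀ (by linarith) ha 3
        _ = Real.exp (K - 1) := hb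
    have h2 : Real.exp (K - 1) ≤ Real.exp ((K - 1) * π) :=
      Real.exp_le_exp.2 (by nlinarith)
    have h3 : K ^ (-2:ℝ) ≤ Q :=
      hQdef ▸ Real.rpow_le_rpow_of_exponent_le hK1 (by linarith)
    have h4 : K ^ (-2:ℝ) = (K ^ 2)⁻¹ := by
      rw [Real.rpow_neg hKpos.le, Real.rpow_two]
    have h5 : (K / 3) ^ 3 ≤ Real.exp ((K - 1) * π) := h1.trans h2
    have h6 : (0:ℝ) < (K / 3) ^ 3 := pow_pos (by linarith) 3
    have h7 : (Real.exp ((K - 1) * π))⁻¹ ≤ ((K / 3) ^ 3)⁻¹ := by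
      apply inv_anti₀ h6 h5
    rw [Real.exp_neg]
    refine h7.trans ?_
    have e1 : ((K / 3) ^ 3)⁻¹ = 27 / K ^ 3 := by
      rw [div_pow, inv_div]; norm_num
    have e2 : c / 2 * (K ^ 2)⁻¹ * K ^ 3 = c * K / 2 := by
      field_simp
    have h8 : 27 / K ^ 3 ≤ c / 2 * (K ^ 2)⁻¹ := by
      rw [div_le_iff₀ (pow_pos hKpos 3), e2, hcK]
      norm_num
    have h9 : c / 2 * (K ^ 2)⁻¹ ≤ c / 2 * Q := by
      rw [← h4]; exact mul_le_mul_of_nonneg_left h3 (by linarith)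
    rw [e1]; exact h8.trans h9
  refine ⟨c * Q / π ^ 2, div_pos (mul_pos hc0 hQpos) hπpos, ?_⟩
  intro w hw l
  obtain ⟨m, hmdef⟩ : ∃ m : ℝ, m = max |l| w := ⟨_, rfl⟩
  rw [← hmdef]
  have hwm : w ≤ m := hmdef ▸ le_max_right _ _
  have hlm : |l| ≤ m := hmdef ▸ le_max_left _ _
  have hw0 : 0 < w := lt_of_le_of_lt hx₀ hw
  have hm0 : 0 < m := lt_of_lt_of_le hw0 hwm
  have hKm0 : 0 < K * m := mul_pos hKpos hm0
  obtain ⟨a, hadef⟩ : ∃ a : ℝ, a = π / m := ⟨_, rfl⟩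
  have ha0 : 0 < a := hadef ▸ div_pos Real.pi_pos hm0
  have hJm := aux_int_sq_exp hint hm0
  have hJKm := aux_int_sq_exp hint hKm0
  have hIcos := aux_int_cos (lam := l) hint hw0
  rw [aux_re_diff hint σ b w l hw0]
  have hφm : φ'' m = 2 * σ ^ 2 + ∫ x in Ioi (0:ℝ), x ^ 2 * Real.exp (-(m * x)) ∂ν :=
    hφ'' m hm0
  have hφKm : φ'' (K * m)
      = 2 * σ ^ 2 + ∫ x in Ioi (0:ℝ), x ^ 2 * Real.exp (-(K * m * x)) ∂ν :=
    hφ'' _ hKm0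
  have hscalKm := hscal K hK1 m (lt_of_lt_of_le hw hwm)
  rw [← hQdef] at hscalKm
  have hJm0 : 0 ≤ ∫ x in Ioi (0:ℝ), x ^ 2 * Real.exp (-(m * x)) ∂ν :=
    setIntegral_nonneg measurableSet_Ioi fun x _ => by positivity
  have hsub1 : Ioc (0:ℝ) a ⊆ Ioi 0 := fun x hx => hx.1
  have hsub2 : Ioi a ⊆ Ioi (0:ℝ) := Ioi_subset_Ioi ha0.le
  have hsplit : (∫ x in Ioi (0:ℝ), x ^ 2 * Real.exp (-(K * m * x)) ∂ν)
      = (∫ x in Ioc (0:ℝ) a, x ^ 2 * Real.exp (-(K * m * x)) ∂ν)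
        + ∫ x in Ioi a, x ^ 2 * Real.exp (-(K * m * x)) ∂ν := by
    rw [show Ioi (0:ℝ) = Ioc 0 a ∪ Ioi a from (Ioc_union_Ioi_eq_Ioi ha0.le).symm]
    exact setIntegral_union (Ioc_disjoint_Ioi le_rfl) measurableSet_Ioi
      (hJKm.mono_set hsub1) (hJKm.mono_set hsub2)
  have htail : (∫ x in Ioi a, x ^ 2 * Real.exp (-(K * m * x)) ∂ν)
      ≤ Real.exp (-((K - 1) * π)) * ∫ x in Ioi (0:ℝ), x ^ 2 * Real.exp (-(m * x)) ∂ν := by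
    have step1 : (∫ x in Ioi a, x ^ 2 * Real.exp (-(K * m * x)) ∂ν)
        ≤ ∫ x in Ioi a, Real.exp (-((K - 1) * π)) * (x ^ 2 * Real.exp (-(m * x))) ∂ν := by
      refine setIntegral_mono_on (hJKm.mono_set hsub2)
        ((hJm.mono_set hsub2).const_mul _) measurableSet_Ioi fun x hx => ?_
      have hxa : a < x := hx
      have hx0 : 0 < x := ha0.trans hxa
      have hpx : π ≤ m * x := by
        rw [hadef] at hxa
        have := (div_lt_iff₀ hm0).1 hxa
        linarith
      have hee : Real.exp (-(K * m * x)) = Real.exp (-((K - 1) * m * x)) * Real.exp (-(m * x)) := by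
        rw [← Real.exp_add]; ring_nf
      rw [hee]
      have h9 : Real.exp (-((K - 1) * m * x)) ≤ Real.exp (-((K - 1) * π)) :=
        Real.exp_le_exp.2 (by nlinarith)
      nlinarith [mul_le_mul_of_nonneg_right h9
        (mul_nonneg (sq_nonneg x) (Real.exp_pos (-(m * x))).le)]
    have step2 : (∫ x in Ioi a, Real.exp (-((K - 1) * π)) * (x ^ 2 * Real.exp (-(m * x))) ∂ν)
        = Real.exp (-((K - 1) * π)) * ∫ x in Ioi a, x ^ 2 * Real.exp (-(m * x)) ∂ν :=
      integral_const_mul _ _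
    have step3 : (∫ x in Ioi a, x ^ 2 * Real.exp (-(m * x)) ∂ν)
        ≤ ∫ x in Ioi (0:ℝ), x ^ 2 * Real.exp (-(m * x)) ∂ν :=
      setIntegral_mono_set hJm (Filter.Eventually.of_forall fun x => by positivity)
        (HasSubset.Subset.eventuallyLE hsub2)
    calc (∫ x in Ioi a, x ^ 2 * Real.exp (-(K * m * x)) ∂ν)
        ≤ Real.exp (-((K - 1) * π)) * ∫ x in Ioi a, x ^ 2 * Real.exp (-(m * x)) ∂ν := by
          rw [← step2]; exact step1
      _ ≤ _ := mul_le_mul_of_nonneg_left step3 (Real.exp_pos _).le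
  have hT2 : Real.exp (-((K - 1) * π)) * (∫ x in Ioi (0:ℝ), x ^ 2 * Real.exp (-(m * x)) ∂ν)
      ≤ c / 2 * Q * φ'' m := by
    have hJmφ : (∫ x in Ioi (0:ℝ), x ^ 2 * Real.exp (-(m * x)) ∂ν) ≤ φ'' m := by
      rw [hφm]; nlinarith [sq_nonneg σ]
    calc Real.exp (-((K - 1) * π)) * (∫ x in Ioi (0:ℝ), x ^ 2 * Real.exp (-(m * x)) ∂ν)
        ≤ c / 2 * Q * (∫ x in Ioi (0:ℝ), x ^ 2 * Real.exp (-(m * x)) ∂ν) :=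
          mul_le_mul_of_nonneg_right hKey hJm0
      _ ≤ c / 2 * Q * φ'' m :=
          mul_le_mul_of_nonneg_left hJmφ (mul_nonneg (by linarith) hQpos.le)
  have hIoc : c / 2 * Q * φ'' m - 2 * σ ^ 2
      ≤ ∫ x in Ioc (0:ℝ) a, x ^ 2 * Real.exp (-(K * m * x)) ∂ν := by
    linarith [hscalKm, htail, hT2, hφKm, hsplit]
  have hmain : 2 / π ^ 2 * l ^ 2 * (c / 2 * Q * φ'' m - 2 * σ ^ 2)
      ≤ ∫ x in Ioi (0:ℝ), (1 - Real.cos (l * x)) * Real.exp (-(w * x)) ∂ν := by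
    have h1 : (∫ x in Ioc (0:ℝ) a, 2 / π ^ 2 * l ^ 2 * (x ^ 2 * Real.exp (-(K * m * x))) ∂ν)
        ≤ ∫ x in Ioc (0:ℝ) a, (1 - Real.cos (l * x)) * Real.exp (-(w * x)) ∂ν := by
      refine setIntegral_mono_on ((hJKm.mono_set hsub1).const_mul _)
        (hIcos.mono_set hsub1) measurableSet_Ioc fun x hx => ?_
      obtain ⟨hx0, hxa⟩ := hx
      have hlx : |l * x| ≤ π := by
        rw [abs_mul, abs_of_pos hx0]
        calc |l| * x ≤ m * x := mul_le_mul_of_nonneg_right hlm hx0.le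
          _ ≤ m * a := mul_le_mul_of_nonneg_left hxa hm0.le
          _ = π := by rw [hadef]; field_simp
      have hcos := Real.cos_le_one_sub_mul_cos_sq hlx
      have h1c : 2 / π ^ 2 * (l * x) ^ 2 ≤ 1 - Real.cos (l * x) := by linarith
      have hee : Real.exp (-(K * m * x)) ≤ Real.exp (-(w * x)) := by
        apply Real.exp_le_exp.2
        have : w * x ≤ K * m * x := by
          nlinarith [mul_nonneg (sub_nonneg.2 hwm) hx0.le,
            mul_nonneg (mul_nonneg (sub_nonneg.2 hK1) hm0.le) hx0.le]
        linarith
      have heq : 2 / π ^ 2 * l ^ 2 * (x ^ 2 * Real.exp (-(K * m * x)))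
          = 2 / π ^ 2 * (l * x) ^ 2 * Real.exp (-(K * m * x)) := by ring
      rw [heq]
      exact mul_le_mul h1c hee (Real.exp_pos _).le
        (by nlinarith [Real.cos_le_one (l * x)])
    have h2 : (∫ x in Ioc (0:ℝ) a, (1 - Real.cos (l * x)) * Real.exp (-(w * x)) ∂ν)
        ≤ ∫ x in Ioi (0:ℝ), (1 - Real.cos (l * x)) * Real.exp (-(w * x)) ∂ν := by
      refine setIntegral_mono_set hIcos
        (Filter.Eventually.of_forall fun x => ?_) (HasSubset.Subset.eventuallyLE hsub1)
      show (0:ℝ) ≤ (1 - Real.cos (l * x)) * Real.exp (-(w * x))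
      have := Real.cos_le_one (l * x)
      have := (Real.exp_pos (-(w * x))).le
      nlinarith
    have h3 : (∫ x in Ioc (0:ℝ) a, 2 / π ^ 2 * l ^ 2 * (x ^ 2 * Real.exp (-(K * m * x))) ∂ν)
        = 2 / π ^ 2 * l ^ 2 * ∫ x in Ioc (0:ℝ) a, x ^ 2 * Real.exp (-(K * m * x)) ∂ν :=
      integral_const_mul _ _
    have h4 : 2 / π ^ 2 * l ^ 2 * (c / 2 * Q * φ'' m - 2 * σ ^ 2)
        ≤ 2 / π ^ 2 * l ^ 2 * ∫ x in Ioc (0:ℝ) a, x ^ 2 * Real.exp (-(K * m * x)) ∂ν :=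
      mul_le_mul_of_nonneg_left hIoc (by positivity)
    calc 2 / π ^ 2 * l ^ 2 * (c / 2 * Q * φ'' m - 2 * σ ^ 2)
        ≤ 2 / π ^ 2 * l ^ 2 * ∫ x in Ioc (0:ℝ) a, x ^ 2 * Real.exp (-(K * m * x)) ∂ν := h4
      _ = _ := h3.symm
      _ ≤ _ := h1
      _ ≤ _ := h2
  have hmain' : 2 * l ^ 2 * (c / 2 * Q * φ'' m - 2 * σ ^ 2)
      ≤ π ^ 2 * ∫ x in Ioi (0:ℝ), (1 - Real.cos (l * x)) * Real.exp (-(w * x)) ∂ν := by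
    have h := mul_le_mul_of_nonneg_left hmain hπpos.le
    have e : π ^ 2 * (2 / π ^ 2 * l ^ 2 * (c / 2 * Q * φ'' m - 2 * σ ^ 2))
        = 2 * l ^ 2 * (c / 2 * Q * φ'' m - 2 * σ ^ 2) := by
      field_simp
    linarith
  rw [show c * Q / π ^ 2 * l ^ 2 * φ'' m = c * Q * l ^ 2 * φ'' m / π ^ 2 by ring,
    div_le_iff₀ hπpos]
  nlinarith [hmain', hπ2,
    mul_nonneg (mul_nonneg (sq_nonneg σ) (sq_nonneg l)) (sub_nonneg.2 hπ2)]

end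
end
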